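/- Let t > 0, let A : [0, t] → M_q(ℂ) be continuous with M = sup_{s ∈ [0,t]} ‖A(s)‖, and let Q, Q₁, Q₂ : [0, t] → M_q(ℂ) be continuous curves with ‖ad‖ · ‖Q(s)‖ ≤ π, ‖ad‖ · ‖Q₁(s)‖ ≤ π, and ‖ad‖ · ‖Q₂(s)‖ ≤ π for all s. Define 𝒜(Q)(τ) = ∫₀^τ g(ad Q(s)) A(s) ds for τ ∈ [0, t]. Then sup_{τ ∈ [0,t]} ‖𝒜(Q)(τ)‖ ≤ t M B₁, and sup_{τ ∈ [0,t]} ‖𝒜(Q₁)(τ) − 𝒜(Q₂)(τ)‖ ≤ t M B₂ ‖ad‖ · sup_{s ∈ [0,t]} ‖Q₁(s) − Q₂(s)‖. -/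

import Mathlib

open MeasureTheory Set

noncomputable section

attribute [local instance] Matrix.frobeniusNormedAddCommGroup Matrix.frobeniusNormedRing
  Matrix.frobeniusNormedSpace

/-- The algebra of `q × q` complex matrices, equipped (locally) with the Frobenius norm,
which is submultiplicative. -/
abbrev Mat (q : ℕ) := Matrix (Fin q) (Fin q) ℂ

/-- The adjoint operator `ad Q = [Q, ·]`. -/
def adOp {q : ℕ} (Q X : Mat q) : Mat q := Q * X - X * Q

/-- The operator `g(ad Q)` given by the convergent power series `Σₖ cₖ (ad Q)ᵏ`. -/
def gAd {q : ℕ} (c : ℕ → ℂ) (Q A : Mat q) : Mat q := ∑' k : ℕ, c k • (adOp Q)^[k] A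

/-- `‖ad‖ = sup { ‖[X,Y]‖ : ‖X‖ = 1 ∧ ‖Y‖ = 1 }`. -/
def adNorm (q : ℕ) : ℝ :=
  sSup {t : ℝ | ∃ X Y : Mat q, ‖X‖ = 1 ∧ ‖Y‖ = 1 ∧ t = ‖X * Y - Y * X‖}

set_option linter.unusedVariables false

lemma adSet_bddAbove (q : ℕ) :
    BddAbove {t : ℝ | ∃ X Y : Mat q, ‖X‖ = 1 ∧ ‖Y‖ = 1 ∧ t = ‖X * Y - Y * X‖} := by
  refine ⟨2, ?_⟩
  rintro r ⟨X, Y, hX, hY, rfl⟩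
  calc ‖X * Y - Y * X‖ ≤ ‖X * Y‖ + ‖Y * X‖ := norm_sub_le _ _
    _ ≤ ‖X‖ * ‖Y‖ + ‖Y‖ * ‖X‖ := add_le_add (norm_mul_le _ _) (norm_mul_le _ _)
    _ = 2 := by rw [hX, hY]; ring

lemma norm_one_smul {q : ℕ} (Z : Mat q) (hZ : Z ≠ 0) : ‖(‖Z‖:ℂ)⁻¹ • Z‖ = 1 := by
  have h : ‖Z‖ ≠ 0 := norm_ne_zero_iff.mpr hZ
  rw [norm_smul, norm_inv, Complex.norm_real, Real.norm_eq_abs, abs_norm,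
    inv_mul_cancel₀ h]

lemma adNorm_nonneg (q : ℕ) (hq : 1 ≤ q) : 0 ≤ adNorm q := by
  haveI : NeZero q := ⟨by omega⟩
  have h1 : (1 : Mat q) ≠ 0 := one_ne_zero
  set X : Mat q := (‖(1:Mat q)‖:ℂ)⁻¹ • 1 with hXdef
  have hX : ‖X‖ = 1 := norm_one_smul _ h1
  have : (0:ℝ) ∈ {t : ℝ | ∃ X Y : Mat q, ‖X‖ = 1 ∧ ‖Y‖ = 1 ∧ t = ‖X * Y - Y * X‖} :=
    ⟨X, X, hX, hX, by simp⟩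
  exact le_csSup (adSet_bddAbove q) this

lemma adOp_norm_le {q : ℕ} (hq : 1 ≤ q) (Q X : Mat q) :
    ‖adOp Q X‖ ≤ adNorm q * ‖Q‖ * ‖X‖ := by
  rcases eq_or_ne Q 0 with rfl | hQ
  · simp [adOp]
  rcases eq_or_ne X 0 with rfl | hX
  · simp [adOp]
  set u : Mat q := (‖Q‖:ℂ)⁻¹ • Q with hu
  set v : Mat q := (‖X‖:ℂ)⁻¹ • X with hv
  have hun : ‖u‖ = 1 := norm_one_smul _ hQ
  have hvn : ‖v‖ = 1 := norm_one_smul _ hX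
  have hmem : ‖u * v - v * u‖ ∈
      {t : ℝ | ∃ X Y : Mat q, ‖X‖ = 1 ∧ ‖Y‖ = 1 ∧ t = ‖X * Y - Y * X‖} :=
    ⟨u, v, hun, hvn, rfl⟩
  have hle : ‖u * v - v * u‖ ≤ adNorm q := le_csSup (adSet_bddAbove q) hmem
  have hQn : (‖Q‖:ℂ) ≠ 0 := by
    simpa using (norm_ne_zero_iff.mpr hQ)
  have hXn : (‖X‖:ℂ) ≠ 0 := by
    simpa using (norm_ne_zero_iff.mpr hX)
  have hscale : adOp Q X = ((‖Q‖:ℂ) * (‖X‖:ℂ)) • (u * v - v * u) := by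
    rw [hu, hv, adOp]
    rw [smul_sub, Matrix.smul_mul, Matrix.mul_smul, Matrix.smul_mul, Matrix.mul_smul]
    rw [smul_smul, smul_smul, smul_smul, smul_smul]
    field_simp
    simp only [one_smul]
  rw [hscale, norm_smul]
  have : ‖(‖Q‖:ℂ) * (‖X‖:ℂ)‖ = ‖Q‖ * ‖X‖ := by
    rw [norm_mul, Complex.norm_real, Complex.norm_real, Real.norm_eq_abs, Real.norm_eq_abs,
      abs_norm, abs_norm]
  rw [this]
  calc ‖Q‖ * ‖X‖ * ‖u * v - v * u‖ ≤ ‖Q‖ * ‖X‖ * adNorm q := by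
        apply mul_le_mul_of_nonneg_left hle (by positivity)
    _ = adNorm q * ‖Q‖ * ‖X‖ := by ring

variable {q : ℕ}

lemma adOp_sub_right (Q X Y : Mat q) : adOp Q (X - Y) = adOp Q X - adOp Q Y := by
  simp only [adOp, Matrix.mul_sub, Matrix.sub_mul]; abel

lemma adOp_sub_left (Q₁ Q₂ X : Mat q) : adOp (Q₁ - Q₂) X = adOp Q₁ X - adOp Q₂ X := by
  simp only [adOp, Matrix.mul_sub, Matrix.sub_mul]; abel

lemma iterate_norm_le (hq : 1 ≤ q) (Q : Mat q) (hπ : adNorm q * ‖Q‖ ≤ Real.pi) (k : ℕ) (X : Mat q) :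
    ‖(adOp Q)^[k] X‖ ≤ Real.pi ^ k * ‖X‖ := by
  induction k with
  | zero => simp
  | succ n ih =>
    rw [Function.iterate_succ_apply']
    calc ‖adOp Q ((adOp Q)^[n] X)‖ ≤ adNorm q * ‖Q‖ * ‖(adOp Q)^[n] X‖ := adOp_norm_le hq _ _
      _ ≤ Real.pi * (Real.pi ^ n * ‖X‖) := by
          apply mul_le_mul hπ ih (norm_nonneg _) Real.pi_pos.le
      _ = Real.pi ^ (n + 1) * ‖X‖ := by ring

lemma iterate_sub_norm_le (hq : 1 ≤ q) (Q₁ Q₂ : Mat q)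
    (h₁ : adNorm q * ‖Q₁‖ ≤ Real.pi) (h₂ : adNorm q * ‖Q₂‖ ≤ Real.pi)
    (k : ℕ) (X : Mat q) :
    ‖(adOp Q₁)^[k] X - (adOp Q₂)^[k] X‖ ≤
      (k : ℝ) * Real.pi ^ (k - 1) * (adNorm q * ‖Q₁ - Q₂‖) * ‖X‖ := by
  have hE : 0 ≤ adNorm q * ‖Q₁ - Q₂‖ :=
    mul_nonneg (adNorm_nonneg q hq) (norm_nonneg _)
  induction k with
  | zero => simp
  | succ n ih =>
    rw [Function.iterate_succ_apply', Function.iterate_succ_apply']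
    have key : adOp Q₁ ((adOp Q₁)^[n] X) - adOp Q₂ ((adOp Q₂)^[n] X) =
        adOp Q₁ ((adOp Q₁)^[n] X - (adOp Q₂)^[n] X) + adOp (Q₁ - Q₂) ((adOp Q₂)^[n] X) := by
      rw [adOp_sub_right, adOp_sub_left]; abel
    rw [key]
    have t1 : ‖adOp Q₁ ((adOp Q₁)^[n] X - (adOp Q₂)^[n] X)‖ ≤
        Real.pi * ((n : ℝ) * Real.pi ^ (n - 1) * (adNorm q * ‖Q₁ - Q₂‖) * ‖X‖) := by
      calc ‖adOp Q₁ ((adOp Q₁)^[n] X - (adOp Q₂)^[n] X)‖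
          ≤ adNorm q * ‖Q₁‖ * ‖(adOp Q₁)^[n] X - (adOp Q₂)^[n] X‖ := adOp_norm_le hq _ _
        _ ≤ Real.pi * ((n : ℝ) * Real.pi ^ (n - 1) * (adNorm q * ‖Q₁ - Q₂‖) * ‖X‖) :=
            mul_le_mul h₁ ih (norm_nonneg _) Real.pi_pos.le
    have t2 : ‖adOp (Q₁ - Q₂) ((adOp Q₂)^[n] X)‖ ≤
        adNorm q * ‖Q₁ - Q₂‖ * (Real.pi ^ n * ‖X‖) := by
      calc ‖adOp (Q₁ - Q₂) ((adOp Q₂)^[n] X)‖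
          ≤ adNorm q * ‖Q₁ - Q₂‖ * ‖(adOp Q₂)^[n] X‖ := adOp_norm_le hq _ _
        _ ≤ adNorm q * ‖Q₁ - Q₂‖ * (Real.pi ^ n * ‖X‖) :=
            mul_le_mul_of_nonneg_left (iterate_norm_le hq Q₂ h₂ n X) hE
    have hπn : Real.pi * ((n:ℝ) * Real.pi ^ (n - 1)) = (n : ℝ) * Real.pi ^ n := by
      cases n with
      | zero => simp
      | succ m =>
        simp only [Nat.add_sub_cancel]
        rw [pow_succ]; push_cast; ring
    calc ‖adOp Q₁ ((adOp Q₁)^[n] X - (adOp Q₂)^[n] X) + adOp (Q₁ - Q₂) ((adOp Q₂)^[n] X)‖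
        ≤ ‖adOp Q₁ ((adOp Q₁)^[n] X - (adOp Q₂)^[n] X)‖ + ‖adOp (Q₁ - Q₂) ((adOp Q₂)^[n] X)‖ :=
          norm_add_le _ _
      _ ≤ Real.pi * ((n : ℝ) * Real.pi ^ (n - 1) * (adNorm q * ‖Q₁ - Q₂‖) * ‖X‖) +
          adNorm q * ‖Q₁ - Q₂‖ * (Real.pi ^ n * ‖X‖) := add_le_add t1 t2
      _ = (Real.pi * ((n:ℝ) * Real.pi ^ (n - 1))) * (adNorm q * ‖Q₁ - Q₂‖) * ‖X‖ +
          Real.pi ^ n * (adNorm q * ‖Q₁ - Q₂‖) * ‖X‖ := by ring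
      _ = ((n + 1 : ℕ) : ℝ) * Real.pi ^ (n + 1 - 1) * (adNorm q * ‖Q₁ - Q₂‖) * ‖X‖ := by
          rw [hπn]; simp only [Nat.add_sub_cancel]; push_cast; ring
variable {q : ℕ} {c : ℕ → ℂ}

lemma summable_norm_gAd (hq : 1 ≤ q)
    (hB₁sum : Summable fun k : ℕ => ‖c k‖ * Real.pi ^ k)
    (Q : Mat q) (hπ : adNorm q * ‖Q‖ ≤ Real.pi) (X : Mat q) :
    Summable fun k : ℕ => ‖c k • (adOp Q)^[k] X‖ := by
  refine Summable.of_nonneg_of_le (fun k => norm_nonneg _) ?_ (hB₁sum.mul_right ‖X‖)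
  · intro k
    rw [norm_smul]
    calc ‖c k‖ * ‖(adOp Q)^[k] X‖
        ≤ ‖c k‖ * (Real.pi ^ k * ‖X‖) :=
          mul_le_mul_of_nonneg_left (iterate_norm_le hq Q hπ k X) (norm_nonneg _)
      _ = ‖c k‖ * Real.pi ^ k * ‖X‖ := by ring

lemma gAd_norm_le (hq : 1 ≤ q)
    (hB₁sum : Summable fun k : ℕ => ‖c k‖ * Real.pi ^ k)
    {B₁ : ℝ} (hB₁ : B₁ = ∑' k : ℕ, ‖c k‖ * Real.pi ^ k)
    (Q : Mat q) (hπ : adNorm q * ‖Q‖ ≤ Real.pi) (X : Mat q) :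
    ‖gAd c Q X‖ ≤ B₁ * ‖X‖ := by
  have hs := summable_norm_gAd hq hB₁sum Q hπ X
  calc ‖gAd c Q X‖ ≤ ∑' k : ℕ, ‖c k • (adOp Q)^[k] X‖ := norm_tsum_le_tsum_norm hs
    _ ≤ ∑' k : ℕ, ‖c k‖ * Real.pi ^ k * ‖X‖ := by
        apply Summable.tsum_le_tsum _ hs (hB₁sum.mul_right _)
        intro k
        rw [norm_smul]
        calc ‖c k‖ * ‖(adOp Q)^[k] X‖
            ≤ ‖c k‖ * (Real.pi ^ k * ‖X‖) :=
              mul_le_mul_of_nonneg_left (iterate_norm_le hq Q hπ k X) (norm_nonneg _)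
          _ = ‖c k‖ * Real.pi ^ k * ‖X‖ := by ring
    _ = B₁ * ‖X‖ := by rw [hB₁, tsum_mul_right]

lemma summable_h
    (hB₂sum : Summable fun k : ℕ => ((k : ℝ) + 1) * ‖c (k + 1)‖ * Real.pi ^ k) :
    Summable fun k : ℕ => (k : ℝ) * Real.pi ^ (k - 1) * ‖c k‖ := by
  apply (summable_nat_add_iff 1).mp
  apply hB₂sum.congr
  intro k
  simp only [Nat.add_sub_cancel, Nat.cast_add, Nat.cast_one]
  ring

lemma tsum_h_eq
    (hB₂sum : Summable fun k : ℕ => ((k : ℝ) + 1) * ‖c (k + 1)‖ * Real.pi ^ k)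
    {B₂ : ℝ}
    (hB₂ : B₂ = ∑' k : ℕ, ((k : ℝ) + 1) * ‖c (k + 1)‖ * Real.pi ^ k) :
    (∑' k : ℕ, (k : ℝ) * Real.pi ^ (k - 1) * ‖c k‖) = B₂ := by
  rw [Summable.tsum_eq_zero_add (summable_h hB₂sum)]
  simp only [Nat.cast_zero, zero_mul, zero_add, Nat.add_sub_cancel]
  rw [hB₂]
  apply tsum_congr
  intro k
  push_cast
  ring

lemma gAd_sub_norm_le (hq : 1 ≤ q)
    (hB₁sum : Summable fun k : ℕ => ‖c k‖ * Real.pi ^ k)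
    (hB₂sum : Summable fun k : ℕ => ((k : ℝ) + 1) * ‖c (k + 1)‖ * Real.pi ^ k)
    {B₂ : ℝ}
    (hB₂ : B₂ = ∑' k : ℕ, ((k : ℝ) + 1) * ‖c (k + 1)‖ * Real.pi ^ k)
    (Q₁ Q₂ : Mat q) (h₁ : adNorm q * ‖Q₁‖ ≤ Real.pi) (h₂ : adNorm q * ‖Q₂‖ ≤ Real.pi)
    (X : Mat q) :
    ‖gAd c Q₁ X - gAd c Q₂ X‖ ≤ B₂ * (adNorm q * ‖Q₁ - Q₂‖) * ‖X‖ := by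
  have hs₁ : Summable fun k : ℕ => c k • (adOp Q₁)^[k] X :=
    (summable_norm_gAd hq hB₁sum Q₁ h₁ X).of_norm
  have hs₂ : Summable fun k : ℕ => c k • (adOp Q₂)^[k] X :=
    (summable_norm_gAd hq hB₁sum Q₂ h₂ X).of_norm
  have hdiff : gAd c Q₁ X - gAd c Q₂ X =
      ∑' k : ℕ, c k • ((adOp Q₁)^[k] X - (adOp Q₂)^[k] X) := by
    rw [gAd, gAd, ← Summable.tsum_sub hs₁ hs₂]
    apply tsum_congr; intro k; rw [smul_sub]
  have hterm : ∀ k : ℕ, ‖c k • ((adOp Q₁)^[k] X - (adOp Q₂)^[k] X)‖ ≤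
      (k : ℝ) * Real.pi ^ (k - 1) * ‖c k‖ * ((adNorm q * ‖Q₁ - Q₂‖) * ‖X‖) := by
    intro k
    rw [norm_smul]
    calc ‖c k‖ * ‖(adOp Q₁)^[k] X - (adOp Q₂)^[k] X‖
        ≤ ‖c k‖ * ((k : ℝ) * Real.pi ^ (k - 1) * (adNorm q * ‖Q₁ - Q₂‖) * ‖X‖) :=
          mul_le_mul_of_nonneg_left (iterate_sub_norm_le hq Q₁ Q₂ h₁ h₂ k X)
            (norm_nonneg _)
      _ = (k : ℝ) * Real.pi ^ (k - 1) * ‖c k‖ * ((adNorm q * ‖Q₁ - Q₂‖) * ‖X‖) := by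
          ring
  have hsn : Summable fun k : ℕ => ‖c k • ((adOp Q₁)^[k] X - (adOp Q₂)^[k] X)‖ :=
    Summable.of_nonneg_of_le (fun k => norm_nonneg _) hterm ((summable_h hB₂sum).mul_right _)
  rw [hdiff]
  calc ‖∑' k : ℕ, c k • ((adOp Q₁)^[k] X - (adOp Q₂)^[k] X)‖
      ≤ ∑' k : ℕ, ‖c k • ((adOp Q₁)^[k] X - (adOp Q₂)^[k] X)‖ := norm_tsum_le_tsum_norm hsn
    _ ≤ ∑' k : ℕ, (k : ℝ) * Real.pi ^ (k - 1) * ‖c k‖ *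
          ((adNorm q * ‖Q₁ - Q₂‖) * ‖X‖) :=
        Summable.tsum_le_tsum hterm hsn ((summable_h hB₂sum).mul_right _)
    _ = B₂ * (adNorm q * ‖Q₁ - Q₂‖) * ‖X‖ := by
        rw [tsum_mul_right, tsum_h_eq hB₂sum hB₂]; ring
lemma iterate_sub_apply (Q : Mat q) (k : ℕ) (X Y : Mat q) :
    (adOp Q)^[k] (X - Y) = (adOp Q)^[k] X - (adOp Q)^[k] Y := by
  induction k with
  | zero => simp
  | succ n ih => rw [Function.iterate_succ_apply', Function.iterate_succ_apply',
      Function.iterate_succ_apply', ih, adOp_sub_right]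

lemma gAd_sub_arg (hq : 1 ≤ q)
    (hB₁sum : Summable fun k : ℕ => ‖c k‖ * Real.pi ^ k)
    (Q : Mat q) (hπ : adNorm q * ‖Q‖ ≤ Real.pi) (X Y : Mat q) :
    gAd c Q X - gAd c Q Y = gAd c Q (X - Y) := by
  rw [gAd, gAd, gAd,
    ← Summable.tsum_sub (show Summable fun k : ℕ => c k • (adOp Q)^[k] X from
        (summable_norm_gAd hq hB₁sum Q hπ X).of_norm)
      (show Summable fun k : ℕ => c k • (adOp Q)^[k] Y from
        (summable_norm_gAd hq hB₁sum Q hπ Y).of_norm)]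
  apply tsum_congr
  intro k
  rw [iterate_sub_apply, smul_sub]

lemma contOn_gAd (hq : 1 ≤ q)
    (hB₁sum : Summable fun k : ℕ => ‖c k‖ * Real.pi ^ k)
    {B₁ : ℝ} (hB₁ : B₁ = ∑' k : ℕ, ‖c k‖ * Real.pi ^ k)
    (hB₂sum : Summable fun k : ℕ => ((k : ℝ) + 1) * ‖c (k + 1)‖ * Real.pi ^ k)
    {B₂ : ℝ}
    (hB₂ : B₂ = ∑' k : ℕ, ((k : ℝ) + 1) * ‖c (k + 1)‖ * Real.pi ^ k)
    {t : ℝ} (A Q : ℝ → Mat q)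
    (hA : ContinuousOn A (Icc 0 t)) (hQc : ContinuousOn Q (Icc 0 t))
    (hQ : ∀ s ∈ Icc (0:ℝ) t, adNorm q * ‖Q s‖ ≤ Real.pi) :
    ContinuousOn (fun s => gAd c (Q s) (A s)) (Icc 0 t) := by
  intro s₀ hs₀
  have key : ∀ s ∈ Icc (0:ℝ) t,
      ‖gAd c (Q s) (A s) - gAd c (Q s₀) (A s₀)‖ ≤
        B₁ * ‖A s - A s₀‖ + B₂ * (adNorm q * ‖Q s - Q s₀‖) * ‖A s₀‖ := by
    intro s hs
    have hsplit : gAd c (Q s) (A s) - gAd c (Q s₀) (A s₀) =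
        (gAd c (Q s) (A s) - gAd c (Q s) (A s₀)) +
        (gAd c (Q s) (A s₀) - gAd c (Q s₀) (A s₀)) := by abel
    rw [hsplit]
    refine (norm_add_le _ _).trans (add_le_add ?_ ?_)
    · rw [gAd_sub_arg hq hB₁sum (Q s) (hQ s hs) (A s) (A s₀)]
      exact gAd_norm_le hq hB₁sum hB₁ (Q s) (hQ s hs) _
    · exact gAd_sub_norm_le hq hB₁sum hB₂sum hB₂ (Q s) (Q s₀) (hQ s hs) (hQ s₀ hs₀) _
  rw [ContinuousWithinAt, ← tendsto_sub_nhds_zero_iff]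
  refine squeeze_zero_norm'
    (f := fun s => gAd c (Q s) (A s) - gAd c (Q s₀) (A s₀))
    (a := fun s => B₁ * ‖A s - A s₀‖ + B₂ * (adNorm q * ‖Q s - Q s₀‖) * ‖A s₀‖)
    (Filter.eventually_of_mem self_mem_nhdsWithin key) ?_
  · have hcw : ContinuousWithinAt
        (fun s => B₁ * ‖A s - A s₀‖ + B₂ * (adNorm q * ‖Q s - Q s₀‖) * ‖A s₀‖)
        (Icc 0 t) s₀ := by
      apply ContinuousWithinAt.add
      · exact continuousWithinAt_const.mul (((hA s₀ hs₀).sub continuousWithinAt_const).norm)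
      · exact (continuousWithinAt_const.mul (continuousWithinAt_const.mul
          (((hQc s₀ hs₀).sub continuousWithinAt_const).norm))).mul continuousWithinAt_const
    have h0 : (B₁ * ‖A s₀ - A s₀‖ + B₂ * (adNorm q * ‖Q s₀ - Q s₀‖) * ‖A s₀‖) = 0 := by
      simp
    simpa [ContinuousWithinAt, h0] using hcw

theorem stmt13 (q : ℕ) (hq : 1 ≤ q)
    (c : ℕ → ℂ)
    (hg : ∀ z : ℂ, ‖z‖ < 2 * Real.pi →
      HasSum (fun k => c k * z ^ k) (if z = 0 then 1 else z / (1 - Complex.exp (-z))))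
    (B₁ B₂ : ℝ)
    (hB₁sum : Summable fun k : ℕ => ‖c k‖ * Real.pi ^ k)
    (hB₁ : B₁ = ∑' k : ℕ, ‖c k‖ * Real.pi ^ k)
    (hB₂sum : Summable fun k : ℕ => ((k : ℝ) + 1) * ‖c (k + 1)‖ * Real.pi ^ k)
    (hB₂ : B₂ = ∑' k : ℕ, ((k : ℝ) + 1) * ‖c (k + 1)‖ * Real.pi ^ k)
    (t : ℝ) (ht : 0 < t)
    (A : ℝ → Mat q) (hA : ContinuousOn A (Icc 0 t))
    (M : ℝ) (hM : M = sSup ((fun s => ‖A s‖) '' Icc 0 t))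
    (Q Q₁ Q₂ : ℝ → Mat q)
    (hQc : ContinuousOn Q (Icc 0 t)) (hQ₁c : ContinuousOn Q₁ (Icc 0 t))
    (hQ₂c : ContinuousOn Q₂ (Icc 0 t))
    (hQ : ∀ s ∈ Icc (0:ℝ) t, adNorm q * ‖Q s‖ ≤ Real.pi)
    (hQ₁ : ∀ s ∈ Icc (0:ℝ) t, adNorm q * ‖Q₁ s‖ ≤ Real.pi)
    (hQ₂ : ∀ s ∈ Icc (0:ℝ) t, adNorm q * ‖Q₂ s‖ ≤ Real.pi) :
    (∀ τ ∈ Icc (0:ℝ) t, ‖∫ s in (0:ℝ)..τ, gAd c (Q s) (A s)‖ ≤ t * M * B₁) ∧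
    (∀ τ ∈ Icc (0:ℝ) t,
      ‖(∫ s in (0:ℝ)..τ, gAd c (Q₁ s) (A s)) - ∫ s in (0:ℝ)..τ, gAd c (Q₂ s) (A s)‖ ≤
        t * M * B₂ * adNorm q * sSup ((fun s => ‖Q₁ s - Q₂ s‖) '' Icc 0 t)) := by
  have hB₁0 : 0 ≤ B₁ := by
    rw [hB₁]; exact tsum_nonneg fun k => by positivity
  have hB₂0 : 0 ≤ B₂ := by
    rw [hB₂]; exact tsum_nonneg fun k => by positivity
  have hadn : 0 ≤ adNorm q := adNorm_nonneg q hq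
  have hMs : ∀ s ∈ Icc (0:ℝ) t, ‖A s‖ ≤ M := by
    intro s hs
    rw [hM]
    exact le_csSup (isCompact_Icc.bddAbove_image hA.norm) ⟨s, hs, rfl⟩
  have hM0 : 0 ≤ M := le_trans (norm_nonneg (A 0)) (hMs 0 ⟨le_refl _, ht.le⟩)
  set S := sSup ((fun s => ‖Q₁ s - Q₂ s‖) '' Icc 0 t) with hS
  have hSs : ∀ s ∈ Icc (0:ℝ) t, ‖Q₁ s - Q₂ s‖ ≤ S := by
    intro s hs
    exact le_csSup (isCompact_Icc.bddAbove_image (hQ₁c.sub hQ₂c).norm) ⟨s, hs, rfl⟩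
  have hS0 : 0 ≤ S := le_trans (norm_nonneg _) (hSs 0 ⟨le_refl _, ht.le⟩)
  constructor
  · intro τ hτ
    obtain ⟨hτ0, hτt⟩ := hτ
    have hb : ∀ s ∈ uIoc (0:ℝ) τ, ‖gAd c (Q s) (A s)‖ ≤ M * B₁ := by
      intro s hs
      rw [uIoc_of_le hτ0] at hs
      have hsI : s ∈ Icc (0:ℝ) t := ⟨hs.1.le, hs.2.trans hτt⟩
      calc ‖gAd c (Q s) (A s)‖ ≤ B₁ * ‖A s‖ := gAd_norm_le hq hB₁sum hB₁ _ (hQ s hsI) _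
        _ ≤ B₁ * M := mul_le_mul_of_nonneg_left (hMs s hsI) hB₁0
        _ = M * B₁ := mul_comm _ _
    calc ‖∫ s in (0:ℝ)..τ, gAd c (Q s) (A s)‖ ≤ M * B₁ * |τ - 0| :=
          intervalIntegral.norm_integral_le_of_norm_le_const hb
      _ = M * B₁ * τ := by rw [sub_zero, abs_of_nonneg hτ0]
      _ ≤ M * B₁ * t := mul_le_mul_of_nonneg_left hτt (by positivity)
      _ = t * M * B₁ := by ring
  · intro τ hτ
    obtain ⟨hτ0, hτt⟩ := hτ
    have hsub : uIcc (0:ℝ) τ ⊆ Icc 0 t := by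
      rw [uIcc_of_le hτ0]; exact Icc_subset_Icc le_rfl hτt
    have h₁int :=
      ((contOn_gAd hq hB₁sum hB₁ hB₂sum hB₂ A Q₁ hA hQ₁c hQ₁).mono hsub).intervalIntegrable (μ := volume)
    have h₂int :=
      ((contOn_gAd hq hB₁sum hB₁ hB₂sum hB₂ A Q₂ hA hQ₂c hQ₂).mono hsub).intervalIntegrable (μ := volume)
    rw [← intervalIntegral.integral_sub h₁int h₂int]
    have hb : ∀ s ∈ uIoc (0:ℝ) τ,
        ‖gAd c (Q₁ s) (A s) - gAd c (Q₂ s) (A s)‖ ≤ M * B₂ * adNorm q * S := by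
      intro s hs
      rw [uIoc_of_le hτ0] at hs
      have hsI : s ∈ Icc (0:ℝ) t := ⟨hs.1.le, hs.2.trans hτt⟩
      calc ‖gAd c (Q₁ s) (A s) - gAd c (Q₂ s) (A s)‖
          ≤ B₂ * (adNorm q * ‖Q₁ s - Q₂ s‖) * ‖A s‖ :=
            gAd_sub_norm_le hq hB₁sum hB₂sum hB₂ _ _ (hQ₁ s hsI) (hQ₂ s hsI) _
        _ ≤ B₂ * (adNorm q * S) * M := by
            apply mul_le_mul
            · exact mul_le_mul_of_nonneg_left
                (mul_le_mul_of_nonneg_left (hSs s hsI) hadn) hB₂0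
            · exact hMs s hsI
            · exact norm_nonneg _
            · positivity
        _ = M * B₂ * adNorm q * S := by ring
    calc ‖∫ s in (0:ℝ)..τ, (gAd c (Q₁ s) (A s) - gAd c (Q₂ s) (A s))‖
        ≤ M * B₂ * adNorm q * S * |τ - 0| :=
          intervalIntegral.norm_integral_le_of_norm_le_const hb
      _ = M * B₂ * adNorm q * S * τ := by rw [sub_zero, abs_of_nonneg hτ0]
      _ ≤ M * B₂ * adNorm q * S * t := mul_le_mul_of_nonneg_left hτt (by positivity)
      _ = t * M * B₂ * adNorm q * S := by ring

end
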